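/- arXiv:1901.08400 — 2 statements merged into one kernel-verified Lean document; each statement's English description precedes it below -/
import Mathlib

section
/- If the variational encoder equals the true posterior, Q(h|v) = P(h|v), and the variational decoder equals the model joint, q(v,h) = P(v,h), then the AdVIL objective L₂ = Σ_v P_D(v) Σ_h Q(h|v)(E(v,h) + log Q(h|v)) - Σ_{v,h} q(v,h)(E(v,h) + log q(v,h)) equals the negative log-likelihood L = -Σ_v P_D(v) log P(v), where P(v) = Σ_h P(v,h). -/
theorem advil_objective_tight_at_optimum
    {V H : Type*} [Fintype V] [Fintype H] [Nonempty V] [Nonempty H]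
    (E : V × H → ℝ) (PD : V → ℝ) (hPD : ∀ v, 0 ≤ PD v) (hPDsum : ∑ v, PD v = 1)
    (Z : ℝ) (hZ : Z = ∑ v, ∑ h, Real.exp (-E (v, h)))
    (P : V × H → ℝ) (hP : ∀ s, P s = Real.exp (-E s) / Z)
    (Pv : V → ℝ) (hPv : ∀ v, Pv v = ∑ h, P (v, h))
    (Q : V → H → ℝ) (hQ : ∀ v h, Q v h = P (v, h) / Pv v)
    (q : V × H → ℝ) (hq : ∀ s, q s = P s) :
    (∑ v, PD v * ∑ h, Q v h * (E (v, h) + Real.log (Q v h))) -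
      (∑ v, ∑ h, q (v, h) * (E (v, h) + Real.log (q (v, h)))) =
    -(∑ v, PD v * Real.log (Pv v)) := by
  have hZpos : 0 < Z := by
    rw [hZ]
    exact Finset.sum_pos (fun v _ => Finset.sum_pos
      (fun h _ => Real.exp_pos _) Finset.univ_nonempty) Finset.univ_nonempty
  have hPpos : ∀ s, 0 < P s := fun s => by
    rw [hP]; exact div_pos (Real.exp_pos _) hZpos
  have hPvpos : ∀ v, 0 < Pv v := fun v => by
    rw [hPv]
    exact Finset.sum_pos (fun h _ => hPpos _) Finset.univ_nonempty
  have hlogP : ∀ s, Real.log (P s) = -E s - Real.log Z := fun s => by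
    rw [hP, Real.log_div (Real.exp_ne_zero _) (ne_of_gt hZpos), Real.log_exp]
  have hsumP : ∑ v, ∑ h, P (v, h) = 1 := by
    simp only [hP]
    simp only [← Finset.sum_div, ← hZ]
    exact div_self (ne_of_gt hZpos)
  have hsumQ : ∀ v, ∑ h, Q v h = 1 := fun v => by
    simp only [hQ, ← Finset.sum_div, ← hPv]
    exact div_self (ne_of_gt (hPvpos v))
  have hlogQ : ∀ v h, Real.log (Q v h) = Real.log (P (v, h)) - Real.log (Pv v) :=
    fun v h => by
      rw [hQ, Real.log_div (ne_of_gt (hPpos _)) (ne_of_gt (hPvpos v))]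
  have hinner : ∀ v, ∑ h, Q v h * (E (v, h) + Real.log (Q v h))
      = -Real.log Z - Real.log (Pv v) := by
    intro v
    have : ∀ h, Q v h * (E (v, h) + Real.log (Q v h))
        = Q v h * (-Real.log Z - Real.log (Pv v)) := fun h => by
      rw [hlogQ, hlogP]; ring
    rw [Finset.sum_congr rfl (fun h _ => this h), ← Finset.sum_mul, hsumQ, one_mul]
  have hsecond : ∑ v, ∑ h, q (v, h) * (E (v, h) + Real.log (q (v, h))) = -Real.log Z := by
    have : ∀ v h, q (v, h) * (E (v, h) + Real.log (q (v, h)))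
        = P (v, h) * (-Real.log Z) := fun v h => by
      rw [hq, hlogP]; ring
    calc ∑ v, ∑ h, q (v, h) * (E (v, h) + Real.log (q (v, h)))
        = ∑ v, ∑ h, P (v, h) * (-Real.log Z) := by
          exact Finset.sum_congr rfl fun v _ => Finset.sum_congr rfl fun h _ => this v h
      _ = (∑ v, ∑ h, P (v, h)) * (-Real.log Z) := by
          rw [Finset.sum_mul]
          exact Finset.sum_congr rfl fun v _ => (Finset.sum_mul _ _ _).symm
      _ = -Real.log Z := by rw [hsumP, one_mul]
  rw [hsecond, Finset.sum_congr rfl (fun v _ => by rw [hinner v])]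
  have expand : ∑ v, PD v * (-Real.log Z - Real.log (Pv v))
      = (∑ v, PD v) * (-Real.log Z) - ∑ v, PD v * Real.log (Pv v) := by
    rw [Finset.sum_mul, ← Finset.sum_sub_distrib]
    exact Finset.sum_congr rfl fun v _ => by ring
  rw [expand, hPDsum]; ring
end

section
/- Let g, d ∈ ℝⁿ satisfy: ‖d‖₂ < ‖g‖₂ if ‖g‖₂ > 0, and ‖d‖₂ = 0 if ‖g‖₂ = 0. Then there exists a symmetric positive definite matrix H such that g - d = H g. -/
theorem exists_spd_matrix_of_grad_condition
    {n : ℕ} (g d : Fin n → ℝ)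
    (h₁ : 0 < Real.sqrt (∑ i, g i ^ 2) →
      Real.sqrt (∑ i, d i ^ 2) < Real.sqrt (∑ i, g i ^ 2))
    (h₂ : Real.sqrt (∑ i, g i ^ 2) = 0 → Real.sqrt (∑ i, d i ^ 2) = 0) :
    ∃ M : Matrix (Fin n) (Fin n) ℝ, M.IsSymm ∧ M.PosDef ∧
      M.mulVec g = g - d := by
  set p : ℝ := ∑ i, g i ^ 2 with hp
  have hpnn : 0 ≤ p := Finset.sum_nonneg fun i _ => sq_nonneg _
  rcases eq_or_lt_of_le hpnn with hp0 | hppos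
  · -- g = 0, so d = 0
    have hg0 : ∀ i, g i = 0 := by
      intro i
      have := (Finset.sum_eq_zero_iff_of_nonneg (fun i _ => sq_nonneg (g i))).mp hp0.symm i (Finset.mem_univ i)
      exact pow_eq_zero_iff (by norm_num) |>.mp this
    have hq0 : (∑ i, d i ^ 2) = 0 := by
      have := h₂ (by rw [← hp0]; simp)
      have hqnn : 0 ≤ ∑ i, d i ^ 2 := Finset.sum_nonneg fun i _ => sq_nonneg _
      nlinarith [Real.sq_sqrt hqnn]
    have hd0 : ∀ i, d i = 0 := by
      intro i
      have := (Finset.sum_eq_zero_iff_of_nonneg (fun i _ => sq_nonneg (d i))).mp hq0 i (Finset.mem_univ i)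
      exact pow_eq_zero_iff (by norm_num) |>.mp this
    refine ⟨1, Matrix.isSymm_one, Matrix.PosDef.one, ?_⟩
    funext i
    simp [Matrix.one_mulVec, hg0 i, hd0 i]
  · -- g ≠ 0
    set q : ℝ := ∑ i, d i ^ 2 with hq
    have hqnn : 0 ≤ q := Finset.sum_nonneg fun i _ => sq_nonneg _
    have hsq : Real.sqrt q < Real.sqrt p := h₁ (Real.sqrt_pos.mpr hppos)
    have hqp : q < p := by
      have := Real.sq_sqrt hqnn
      have := Real.sq_sqrt hpnn
      nlinarith [Real.sqrt_nonneg q]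
    set c : ℝ := ∑ i, (g i - d i) * g i with hcdef
    have hgd : (∑ i, d i * g i) ^ 2 ≤ q * p := by
      have := Finset.sum_mul_sq_le_sq_mul_sq Finset.univ d g
      simpa using this
    have hc : 0 < c := by
      have hsum : c = p - ∑ i, d i * g i := by
        rw [hcdef, hp, ← Finset.sum_sub_distrib]
        congr 1; funext i; ring
      have hle : ∑ i, d i * g i ≤ Real.sqrt (q * p) := by
        have h1 : (∑ i, d i * g i) ≤ |∑ i, d i * g i| := le_abs_self _
        have h2 : |∑ i, d i * g i| = Real.sqrt ((∑ i, d i * g i) ^ 2) := by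
          rw [Real.sqrt_sq_eq_abs]
        calc ∑ i, d i * g i ≤ Real.sqrt ((∑ i, d i * g i) ^ 2) := by rw [← h2]; exact h1
          _ ≤ Real.sqrt (q * p) := Real.sqrt_le_sqrt hgd
      have hlt : Real.sqrt (q * p) < p := by
        have : Real.sqrt (q * p) < Real.sqrt (p * p) := by
          apply Real.sqrt_lt_sqrt (by positivity)
          nlinarith
        rwa [Real.sqrt_mul_self hpnn] at this
      linarith
    -- Define M
    set v : Fin n → ℝ := fun i => g i - d i with hv
    set M : Matrix (Fin n) (Fin n) ℝ :=
      fun i j => v i * v j / c - g i * g j / p + (if i = j then 1 else 0) with hM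
    have hMsymm : M.IsSymm := by
      unfold Matrix.IsSymm
      ext i j
      rw [Matrix.transpose_apply]; simp only [hM]
      by_cases h : i = j
      · subst h; ring
      · simp only [if_neg h, if_neg (Ne.symm h)]; ring
    have hmulVec : ∀ x : Fin n → ℝ, M.mulVec x = fun i =>
        v i * (∑ j, v j * x j) / c - g i * (∑ j, g j * x j) / p + x i := by
      intro x
      funext i
      simp only [Matrix.mulVec, dotProduct, hM]
      have step : ∀ j, (v i * v j / c - g i * g j / p + if i = j then 1 else 0) * x j =
          (v i / c) * (v j * x j) - (g i / p) * (g j * x j) + (if i = j then x j else 0) := by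
        intro j
        by_cases h : i = j
        · simp only [if_pos h]; ring
        · simp only [if_neg h]; ring
      rw [Finset.sum_congr rfl (fun j _ => step j)]
      rw [Finset.sum_add_distrib, Finset.sum_sub_distrib, ← Finset.mul_sum, ← Finset.mul_sum,
        Finset.sum_ite_eq Finset.univ i x]
      simp only [Finset.mem_univ, if_true]
      try ring
    have hvg : (∑ j, v j * g j) = c := rfl
    have hgg : (∑ j, g j * g j) = p := by rw [hp]; congr 1; funext j; ring
    refine ⟨M, hMsymm, ?_, ?_⟩
    · rw [Matrix.posDef_iff_dotProduct_mulVec]; constructor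
      · show M.conjTranspose = M
        have heq : M.conjTranspose = M.transpose := by
          ext i j; simp [Matrix.conjTranspose_apply]
        rw [heq]; exact hMsymm
      · intro x hx
        have hform : dotProduct (star x) (M.mulVec x) =
            (∑ j, v j * x j) ^ 2 / c + ∑ i, (x i - (∑ j, g j * x j) / p * g i) ^ 2 := by
          rw [hmulVec x]
          simp only [dotProduct, Pi.star_apply, star_trivial]
          set a : ℝ := ∑ j, g j * x j
          set b : ℝ := ∑ j, v j * x j
          have expand : ∀ i, x i * (v i * b / c - g i * a / p + x i) =
              (b / c) * (v i * x i) - (a / p) * (g i * x i) + x i ^ 2 := by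
            intro i; ring
          rw [Finset.sum_congr rfl (fun i _ => expand i)]
          rw [Finset.sum_add_distrib, Finset.sum_sub_distrib, ← Finset.mul_sum, ← Finset.mul_sum]
          have expand2 : ∀ i, (x i - a / p * g i) ^ 2 =
              x i ^ 2 - (2 * a / p) * (g i * x i) + (a / p) ^ 2 * g i ^ 2 := by
            intro i; ring
          rw [Finset.sum_congr rfl (fun i _ => expand2 i)]
          rw [Finset.sum_add_distrib, Finset.sum_sub_distrib, ← Finset.mul_sum, ← Finset.mul_sum, ← hp]
          field_simp
          ring
        rw [hform]
        have hb2 : 0 ≤ (∑ j, v j * x j) ^ 2 / c := by positivity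
        have hsq2 : 0 ≤ ∑ i, (x i - (∑ j, g j * x j) / p * g i) ^ 2 :=
          Finset.sum_nonneg fun i _ => sq_nonneg _
        rcases lt_or_eq_of_le hsq2 with h | h
        · linarith
        · -- all x i = (a/p) g i
          have hall : ∀ i, x i = (∑ j, g j * x j) / p * g i := by
            intro i
            have := (Finset.sum_eq_zero_iff_of_nonneg
              (fun i _ => sq_nonneg (x i - (∑ j, g j * x j) / p * g i))).mp h.symm i (Finset.mem_univ i)
            have := pow_eq_zero_iff (n := 2) (by norm_num) |>.mp this
            linarith
          set t : ℝ := (∑ j, g j * x j) / p with ht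
          have hbt : (∑ j, v j * x j) = t * c := by
            rw [← hvg, Finset.mul_sum]
            exact Finset.sum_congr rfl fun j _ => by rw [hall j]; ring
          have htne : t ≠ 0 := by
            intro h0
            apply hx
            funext i
            simp [hall i, h0]
          rw [hbt, ← h]
          have : 0 < (t * c) ^ 2 / c := by positivity
          linarith
    · rw [hmulVec g, hvg, hgg]
      funext i
      simp only [Pi.sub_apply]
      field_simp [hv]
      ring
end
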